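/- For every δ ∈ (0,1) there exists a constant C = C(δ) > 0 such that for every natural number n, every j ∈ {2,3}, and every (u1,u2) ∈ Γ with u1 ≥ 1/(n+1) and u2 > 0: | (1/A_n^δ) · Σ_{k=0}^{n} A_{n−k}^{δ−1} · H*_{k,j}(u1,u2) | ≤ C / ( u1^{δ+1} · (n+1)^δ · u2 ). -/

import Mathlib

open MeasureTheory Finset

/-- The triangle `Γ = {(u₁,u₂) : 0 ≤ u₂ ≤ u₁/3, 0 ≤ u₁ ≤ 1}`. -/
def GammaT : Set (ℝ × ℝ) := {u | 0 ≤ u.2 ∧ u.2 ≤ u.1 / 3 ∧ 0 ≤ u.1 ∧ u.1 ≤ 1}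

open Finset in
/-- Cesàro numbers: `A_n^δ = (δ+1)(δ+2)⋯(δ+n)/n!`, with `A_0^δ = 1`. -/
noncomputable def cesaroA (δ : ℝ) (n : ℕ) : ℝ :=
  (∏ i ∈ Finset.range n, (δ + i + 1)) / n.factorial

/-- The function `H*_{k,2}`. -/
noncomputable def Hstar2 (k : ℕ) (u : ℝ × ℝ) : ℝ :=
  -((1 / 2) * Real.cos ((2 * (k : ℝ) + 1) * Real.pi * (u.1 + u.2) / 2) /
    (Real.sin (Real.pi * u.2) * Real.sin (Real.pi * (u.1 - u.2) / 2)))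

/-- The function `H*_{k,3}`. -/
noncomputable def Hstar3 (k : ℕ) (u : ℝ × ℝ) : ℝ :=
  (1 / 2) * Real.cos ((2 * (k : ℝ) + 1) * Real.pi * (u.1 - u.2) / 2) /
    (Real.sin (Real.pi * u.2) * Real.sin (Real.pi * (u.1 + u.2) / 2))

namespace CesAux

open Real

lemma cesaroA_zero (δ : ℝ) : cesaroA δ 0 = 1 := by simp [cesaroA]

lemma cesaroA_succ (δ : ℝ) (n : ℕ) :
    cesaroA δ (n + 1) = cesaroA δ n * ((δ + n + 1) / (n + 1)) := by
  have h1 : ((n.factorial : ℝ)) ≠ 0 := by positivity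
  have h2 : ((n : ℝ) + 1) ≠ 0 := by positivity
  unfold cesaroA
  rw [Finset.prod_range_succ, Nat.factorial_succ]
  push_cast
  rw [div_mul_div_comm]
  congr 1 <;> ring

lemma cesaroA_pos {δ : ℝ} (hδ : -1 < δ) (n : ℕ) : 0 < cesaroA δ n := by
  induction n with
  | zero => simp [cesaroA_zero]
  | succ n ih =>
      rw [cesaroA_succ]
      have h1 : 0 < δ + n + 1 := by
        have : (0:ℝ) ≤ n := Nat.cast_nonneg n
        linarith
      have h2 : 0 < (n:ℝ) + 1 := by positivity
      positivity

lemma cesaroA_sub_one_succ (δ : ℝ) (n : ℕ) :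
    cesaroA (δ - 1) (n + 1) = cesaroA δ n * (δ / (n + 1)) := by
  have h1 : ((n.factorial : ℝ)) ≠ 0 := by positivity
  have h2 : ((n : ℝ) + 1) ≠ 0 := by positivity
  unfold cesaroA
  rw [Finset.prod_range_succ', Nat.factorial_succ]
  have h3 : ∀ i ∈ Finset.range n, (δ - 1 + (↑(i+1)) + 1) = δ + i + 1 := by
    intro i _
    push_cast
    ring
  rw [Finset.prod_congr rfl h3]
  push_cast
  rw [div_mul_div_comm]
  congr 1 <;> ring

lemma sum_cesaroA (δ : ℝ) (n : ℕ) :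
    ∑ ν ∈ Finset.range (n + 1), cesaroA (δ - 1) ν = cesaroA δ n := by
  induction n with
  | zero => simp [cesaroA_zero]
  | succ n ih =>
      rw [Finset.sum_range_succ, ih, cesaroA_sub_one_succ, cesaroA_succ]
      have h2 : ((n : ℝ) + 1) ≠ 0 := by positivity
      field_simp
      ring

lemma cesaroA_sub_one_antitone {δ : ℝ} (hδ0 : 0 < δ) (hδ1 : δ < 1) :
    Antitone (fun n => cesaroA (δ - 1) n) := by
  apply antitone_nat_of_succ_le
  intro n
  have h := cesaroA_succ (δ - 1) n
  have hp : 0 < cesaroA (δ - 1) n := cesaroA_pos (by linarith) n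
  have h2 : (0:ℝ) < (n:ℝ) + 1 := by positivity
  have h3 : (δ - 1 + n + 1) / (n + 1) ≤ 1 := by
    rw [div_le_one h2]
    linarith
  have h4 : 0 ≤ (δ - 1 + (n:ℝ) + 1) := by
    have : (0:ℝ) ≤ n := Nat.cast_nonneg n
    linarith
  calc cesaroA (δ-1) (n+1) = cesaroA (δ-1) n * ((δ - 1 + n + 1) / (n + 1)) := h
    _ ≤ cesaroA (δ-1) n * 1 := by
        apply mul_le_mul_of_nonneg_left h3 hp.le
    _ = cesaroA (δ-1) n := mul_one _

lemma cesaroA_lower {δ : ℝ} (hδ0 : 0 < δ) (hδ1 : δ < 1) (n : ℕ) :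
    ((n : ℝ) + 1) ^ δ ≤ cesaroA δ n := by
  induction n with
  | zero => norm_num [cesaroA_zero, Real.one_rpow]
  | succ n ih =>
      have hn1 : (0:ℝ) < (n:ℝ) + 1 := by positivity
      set x : ℝ := 1 / ((n:ℝ) + 1) with hx
      have hxpos : 0 < x := by positivity
      have hb : (1 + x) ^ δ ≤ 1 + δ * x :=
        rpow_one_add_le_one_add_mul_self (by linarith) hδ0.le hδ1.le
      have hsplit : ((n:ℝ) + 1 + 1) = ((n:ℝ) + 1) * (1 + x) := by
        rw [hx]; field_simp
      have h1 : ((n:ℝ) + 1 + 1) ^ δ = ((n:ℝ) + 1) ^ δ * (1 + x) ^ δ := by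
        rw [hsplit, Real.mul_rpow hn1.le (by positivity)]
      have h2 : cesaroA δ (n+1) = cesaroA δ n * (1 + δ * x) := by
        rw [cesaroA_succ]
        congr 1
        rw [hx]
        field_simp
        ring
      push_cast
      rw [h1, h2]
      apply mul_le_mul ih hb (by positivity)
      exact (cesaroA_pos (by linarith) n).le

lemma cesaroA_sub_one_upper {δ : ℝ} (hδ0 : 0 < δ) (hδ1 : δ < 1) (n : ℕ) :
    cesaroA (δ - 1) n ≤ ((n : ℝ) + 1) ^ (δ - 1) := by
  induction n with
  | zero => norm_num [cesaroA_zero, Real.one_rpow]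
  | succ n ih =>
      have hn1 : (0:ℝ) < (n:ℝ) + 1 := by positivity
      set x : ℝ := 1 / ((n:ℝ) + 1) with hx
      have hxpos : 0 < x := by positivity
      set ε : ℝ := 1 - δ with hε
      have hε0 : 0 < ε := by rw [hε]; linarith
      have hb : (1 + x) ^ ε ≤ 1 + ε * x :=
        rpow_one_add_le_one_add_mul_self (by linarith) hε0.le (by rw [hε]; linarith)
      have hεx : ε * x < 1 := by
        have : ε < 1 := by rw [hε]; linarith
        have hx1 : x ≤ 1 := by
          rw [hx]
          rw [div_le_one hn1]
          have : (0:ℝ) ≤ n := Nat.cast_nonneg n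
          linarith
        nlinarith
      have hkey : 1 - ε * x ≤ (1 + x) ^ (δ - 1) := by
        have hp : (0:ℝ) < (1 + x) ^ ε := Real.rpow_pos_of_pos (by linarith) ε
        have h5 : (1 - ε * x) * (1 + x) ^ ε ≤ (1 - ε * x) * (1 + ε * x) := by
          apply mul_le_mul_of_nonneg_left hb (by linarith)
        have h6 : (1 - ε * x) * (1 + ε * x) ≤ 1 := by nlinarith [sq_nonneg (ε * x)]
        have h7 : (1 + x) ^ (δ - 1) = ((1 + x) ^ ε)⁻¹ := by
          rw [show δ - 1 = -ε by rw [hε]; ring, Real.rpow_neg (by linarith)]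
        have h8 : (1 - ε * x) * (1 + x) ^ ε ≤ 1 := le_trans h5 h6
        rw [h7]
        calc 1 - ε * x = (1 - ε * x) * ((1 + x) ^ ε * ((1 + x) ^ ε)⁻¹) := by
              rw [mul_inv_cancel₀ hp.ne', mul_one]
          _ = ((1 - ε * x) * (1 + x) ^ ε) * ((1 + x) ^ ε)⁻¹ := by ring
          _ ≤ 1 * ((1 + x) ^ ε)⁻¹ :=
              mul_le_mul_of_nonneg_right h8 (inv_nonneg.mpr hp.le)
          _ = ((1 + x) ^ ε)⁻¹ := one_mul _
      have hsplit : ((n:ℝ) + 1 + 1) = ((n:ℝ) + 1) * (1 + x) := by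
        rw [hx]; field_simp
      have h1 : ((n:ℝ) + 1 + 1) ^ (δ-1) = ((n:ℝ) + 1) ^ (δ-1) * (1 + x) ^ (δ-1) := by
        rw [hsplit, Real.mul_rpow hn1.le (by positivity)]
      have h2 : cesaroA (δ-1) (n+1) = cesaroA (δ-1) n * (1 - ε * x) := by
        rw [cesaroA_succ]
        congr 1
        rw [hε, hx]
        field_simp
        ring
      push_cast
      rw [h1, h2]
      have hnn : (0:ℝ) ≤ ((n:ℝ)+1) ^ (δ-1) := (Real.rpow_pos_of_pos hn1 _).le
      calc cesaroA (δ-1) n * (1 - ε*x) ≤ ((n:ℝ)+1)^(δ-1) * (1 - ε*x) := by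
            apply mul_le_mul_of_nonneg_right ih (by linarith)
        _ ≤ ((n:ℝ)+1)^(δ-1) * (1+x)^(δ-1) := by
            apply mul_le_mul_of_nonneg_left hkey hnn

lemma cesaroA_upper {δ : ℝ} (hδ0 : 0 < δ) (hδ1 : δ < 1) (n : ℕ) :
    cesaroA δ n ≤ ((n : ℝ) + 1) ^ δ / δ := by
  have hn1 : (0:ℝ) < (n:ℝ) + 1 := by positivity
  have h1 : cesaroA (δ - 1) (n + 1) = cesaroA δ n * (δ / (n + 1)) := cesaroA_sub_one_succ δ n
  have h2 : cesaroA (δ - 1) (n + 1) ≤ ((n:ℝ) + 1 + 1) ^ (δ - 1) := by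
    have := cesaroA_sub_one_upper hδ0 hδ1 (n + 1)
    push_cast at this
    exact this
  have h3 : ((n:ℝ) + 1 + 1) ^ (δ - 1) ≤ ((n:ℝ) + 1) ^ (δ - 1) :=
    Real.rpow_le_rpow_of_nonpos hn1 (by linarith) (by linarith)
  have h4 : cesaroA δ n * (δ / (n + 1)) ≤ ((n:ℝ) + 1) ^ (δ - 1) := by
    rw [← h1]; exact h2.trans h3
  have h5 : ((n:ℝ) + 1) ^ (δ - 1) * ((n:ℝ) + 1) = ((n:ℝ) + 1) ^ δ := by
    rw [← Real.rpow_add_one hn1.ne' (δ - 1)]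
    norm_num
  rw [le_div_iff₀ hδ0]
  calc cesaroA δ n * δ = cesaroA δ n * (δ / ((n:ℝ)+1)) * ((n:ℝ)+1) := by field_simp
    _ ≤ ((n:ℝ)+1)^(δ-1) * ((n:ℝ)+1) := by
        apply mul_le_mul_of_nonneg_right h4 hn1.le
    _ = ((n:ℝ)+1)^δ := h5

end CesAux
namespace CesAux

open Real Finset

lemma sin_ge {x : ℝ} (h0 : 0 ≤ x) (h1 : x ≤ 2 * π / 3) : x / 3 ≤ Real.sin x := by
  rcases le_or_gt x (π / 2) with hx | hx
  · have h := Real.mul_le_sin h0 hx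
    have hπ : π < 3.15 := Real.pi_lt_d2
    have hπ0 : 0 < π := Real.pi_pos
    have hc : (1:ℝ)/3 ≤ 2/π := by
      rw [div_le_div_iff₀ (by norm_num) hπ0]
      linarith
    have h2 : x / 3 ≤ 2 / π * x := by
      calc x / 3 = (1/3) * x := by ring
        _ ≤ 2/π * x := mul_le_mul_of_nonneg_right hc h0
    linarith
  · have hπ0 : 0 < π := Real.pi_pos
    have hs : Real.sin x = Real.sin (π - x) := (Real.sin_pi_sub x).symm
    have hmem1 : π / 3 ∈ Set.Icc (-(π/2)) (π/2) := by constructor <;> linarith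
    have hmem2 : π - x ∈ Set.Icc (-(π/2)) (π/2) := by constructor <;> linarith
    have hmono := Real.strictMonoOn_sin.monotoneOn hmem1 hmem2 (by linarith)
    rw [Real.sin_pi_div_three] at hmono
    have hsq : Real.sqrt 3 ^ 2 = 3 := Real.sq_sqrt (by norm_num)
    have hsn : 0 ≤ Real.sqrt 3 := Real.sqrt_nonneg 3
    have h17 : (1.7:ℝ) ≤ Real.sqrt 3 := by nlinarith
    have hπ : π < 3.15 := Real.pi_lt_d2
    rw [hs]
    nlinarith

lemma two_sin_mul_sum (φ ψ : ℝ) (m : ℕ) :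
    2 * Real.sin φ * ∑ ν ∈ Finset.range m, Real.cos (ψ - 2 * ν * φ)
      = Real.sin (ψ + φ) - Real.sin (ψ + φ - 2 * m * φ) := by
  induction m with
  | zero => simp
  | succ m ih =>
      rw [Finset.sum_range_succ, mul_add, ih]
      push_cast
      have e1 : Real.sin ((ψ - 2*m*φ) + φ)
          = Real.sin (ψ - 2*m*φ) * Real.cos φ + Real.cos (ψ - 2*m*φ) * Real.sin φ :=
        Real.sin_add _ _
      have e2 : Real.sin ((ψ - 2*m*φ) - φ)
          = Real.sin (ψ - 2*m*φ) * Real.cos φ - Real.cos (ψ - 2*m*φ) * Real.sin φ :=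
        Real.sin_sub _ _
      rw [show ψ + φ - 2 * ((m:ℝ) + 1) * φ = (ψ - 2 * m * φ) - φ by ring,
          show ψ + φ - 2 * (m:ℝ) * φ = (ψ - 2 * m * φ) + φ by ring, e1, e2]
      ring

lemma abs_sum_cos_le {φ : ℝ} (hs : 0 < Real.sin φ) (ψ : ℝ) (m : ℕ) :
    |∑ ν ∈ Finset.range m, Real.cos (ψ - 2 * ν * φ)| ≤ 1 / Real.sin φ := by
  set S := ∑ ν ∈ Finset.range m, Real.cos (ψ - 2 * ν * φ) with hS
  have hid := two_sin_mul_sum φ ψ m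
  have habs : |2 * Real.sin φ * S| ≤ 2 := by
    rw [← hS] at hid
    rw [hid, abs_le]
    have b1 := Real.neg_one_le_sin (ψ + φ)
    have b2 := Real.sin_le_one (ψ + φ)
    have b3 := Real.neg_one_le_sin (ψ + φ - 2 * m * φ)
    have b4 := Real.sin_le_one (ψ + φ - 2 * m * φ)
    constructor <;> linarith
  have h3 : |2 * Real.sin φ * S| = 2 * Real.sin φ * |S| := by
    rw [abs_mul, abs_of_pos (by positivity : (0:ℝ) < 2 * Real.sin φ)]
  rw [h3] at habs
  rw [le_div_iff₀ hs]
  nlinarith [abs_nonneg S]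

lemma abel_bound (a e : ℕ → ℝ) (B : ℝ) (hmono : ∀ i, a (i + 1) ≤ a i)
    (hnn : ∀ i, 0 ≤ a i) (hP : ∀ m, |∑ ν ∈ Finset.range m, e ν| ≤ B) (m : ℕ) :
    |∑ ν ∈ Finset.range m, a ν * e ν| ≤ a 0 * B := by
  have hB : 0 ≤ B := by simpa using hP 0
  have hanti : Antitone a := antitone_nat_of_succ_le hmono
  rcases Nat.eq_zero_or_pos m with rfl | hm
  · simpa using mul_nonneg (hnn 0) hB
  have H := Finset.sum_range_by_parts a e m
  simp only [smul_eq_mul] at H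
  rw [H]
  have tri : ∀ X Y : ℝ, |X - Y| ≤ |X| + |Y| := by
    intro X Y
    calc |X - Y| = |X + -Y| := by ring_nf
      _ ≤ |X| + |-Y| := abs_add_le X (-Y)
      _ = |X| + |Y| := by rw [abs_neg]
  have key : |∑ i ∈ Finset.range (m-1), (a (i+1) - a i) * (∑ j ∈ Finset.range (i+1), e j)|
      ≤ (a 0 - a (m-1)) * B := by
    calc |∑ i ∈ Finset.range (m-1), (a (i+1) - a i) * (∑ j ∈ Finset.range (i+1), e j)|
        ≤ ∑ i ∈ Finset.range (m-1), |(a (i+1) - a i) * (∑ j ∈ Finset.range (i+1), e j)| :=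
          Finset.abs_sum_le_sum_abs _ _
      _ ≤ ∑ i ∈ Finset.range (m-1), (a i - a (i+1)) * B := by
          apply Finset.sum_le_sum
          intro i _
          rw [abs_mul, abs_sub_comm, abs_of_nonneg (sub_nonneg.mpr (hmono i))]
          exact mul_le_mul_of_nonneg_left (hP (i+1)) (sub_nonneg.mpr (hmono i))
      _ = (a 0 - a (m-1)) * B := by
          rw [← Finset.sum_mul, Finset.sum_range_sub' a (m-1)]
  have h1 : |a (m-1) * (∑ j ∈ Finset.range m, e j)| ≤ a (m-1) * B := by
    rw [abs_mul, abs_of_nonneg (hnn _)]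
    exact mul_le_mul_of_nonneg_left (hP m) (hnn _)
  calc |a (m-1) * (∑ j ∈ Finset.range m, e j) -
        ∑ i ∈ Finset.range (m-1), (a (i+1) - a i) * (∑ j ∈ Finset.range (i+1), e j)|
      ≤ |a (m-1) * (∑ j ∈ Finset.range m, e j)| +
        |∑ i ∈ Finset.range (m-1), (a (i+1) - a i) * (∑ j ∈ Finset.range (i+1), e j)| :=
        tri _ _
    _ ≤ a (m-1) * B + (a 0 - a (m-1)) * B := add_le_add h1 key
    _ = a 0 * B := by ring

end CesAux
namespace CesAux

open Real Finset

lemma core {δ : ℝ} (hδ0 : 0 < δ) (hδ1 : δ < 1) (n : ℕ) {φ : ℝ} (ψ : ℝ)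
    (hφ0 : 0 < φ) (hφub : φ ≤ 2 * π / 3) :
    |∑ ν ∈ Finset.range (n+1), cesaroA (δ-1) ν * Real.cos (ψ - 2 * ν * φ)| ≤
      (4 / δ + 3) * φ ^ (-δ) := by
  have hπ4 : π ≤ 4 := Real.pi_le_four
  have hπ0 : 0 < π := Real.pi_pos
  have hφ3 : φ ≤ 3 := by linarith
  have hφπ : φ < π := lt_of_le_of_lt hφub (by linarith)
  have hsinpos : 0 < Real.sin φ := Real.sin_pos_of_pos_of_lt_pi hφ0 hφπ
  have hsin3 : φ / 3 ≤ Real.sin φ := sin_ge hφ0.le hφub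
  have hrpos : 0 < φ ^ (-δ) := Real.rpow_pos_of_pos hφ0 _
  set M : ℕ := ⌊1/φ⌋₊ with hM
  set m0 : ℕ := min (M+1) (n+1) with hm0
  have hm0le : m0 ≤ n + 1 := min_le_right _ _
  have hsplitsum : ∑ ν ∈ Finset.range (n+1), cesaroA (δ-1) ν * Real.cos (ψ - 2*ν*φ)
      = (∑ ν ∈ Finset.range m0, cesaroA (δ-1) ν * Real.cos (ψ - 2*ν*φ))
        + ∑ ν ∈ Finset.Ico m0 (n+1), cesaroA (δ-1) ν * Real.cos (ψ - 2*ν*φ) := by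
    rw [Finset.range_eq_Ico, ← Finset.sum_Ico_consecutive _ (Nat.zero_le m0) hm0le,
      ← Finset.range_eq_Ico]
  -- head bound
  have hMφ : (M:ℝ) + 1 ≤ 4 / φ := by
    have h1 : (M:ℝ) ≤ 1/φ := Nat.floor_le (by positivity)
    have h2 : (1:ℝ) ≤ 3/φ := by rw [le_div_iff₀ hφ0]; linarith
    have h3 : 1/φ + 3/φ = 4/φ := by ring
    linarith
  have e1 : ((M:ℝ)+1)^δ ≤ 4 * φ^(-δ) := by
    calc ((M:ℝ)+1)^δ ≤ (4/φ)^δ := Real.rpow_le_rpow (by positivity) hMφ hδ0.le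
      _ = 4^δ * φ^(-δ) := by
          rw [Real.div_rpow (by norm_num) hφ0.le, Real.rpow_neg hφ0.le, div_eq_mul_inv]
      _ ≤ 4 * φ^(-δ) := by
          apply mul_le_mul_of_nonneg_right _ hrpos.le
          calc (4:ℝ)^δ ≤ 4^(1:ℝ) := Real.rpow_le_rpow_of_exponent_le (by norm_num) hδ1.le
            _ = 4 := Real.rpow_one 4
  have hhead : |∑ ν ∈ Finset.range m0, cesaroA (δ-1) ν * Real.cos (ψ - 2*ν*φ)| ≤
      (4/δ) * φ^(-δ) := by
    calc |∑ ν ∈ Finset.range m0, cesaroA (δ-1) ν * Real.cos (ψ - 2*ν*φ)|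
        ≤ ∑ ν ∈ Finset.range m0, |cesaroA (δ-1) ν * Real.cos (ψ - 2*ν*φ)| :=
          Finset.abs_sum_le_sum_abs _ _
      _ ≤ ∑ ν ∈ Finset.range m0, cesaroA (δ-1) ν := by
          apply Finset.sum_le_sum
          intro ν _
          rw [abs_mul, abs_of_nonneg (cesaroA_pos (by linarith) ν).le]
          calc cesaroA (δ-1) ν * |Real.cos (ψ - 2*ν*φ)| ≤ cesaroA (δ-1) ν * 1 :=
                mul_le_mul_of_nonneg_left (Real.abs_cos_le_one _)
                  (cesaroA_pos (by linarith) ν).le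
            _ = cesaroA (δ-1) ν := mul_one _
      _ ≤ ∑ ν ∈ Finset.range (M+1), cesaroA (δ-1) ν := by
          apply Finset.sum_le_sum_of_subset_of_nonneg
          · exact Finset.range_subset_range.mpr (min_le_left _ _)
          · intro ν _ _
            exact (cesaroA_pos (by linarith) ν).le
      _ = cesaroA δ M := sum_cesaroA δ M
      _ ≤ ((M:ℝ)+1)^δ / δ := cesaroA_upper hδ0 hδ1 M
      _ ≤ 4 * φ^(-δ) / δ := by gcongr
      _ = (4/δ) * φ^(-δ) := by ring
  -- tail bound
  have htail : |∑ ν ∈ Finset.Ico m0 (n+1), cesaroA (δ-1) ν * Real.cos (ψ - 2*ν*φ)| ≤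
      3 * φ^(-δ) := by
    rcases le_or_gt (M+1) (n+1) with hcase | hcase
    · have hm0eq : m0 = M + 1 := min_eq_left hcase
      rw [Finset.sum_Ico_eq_sum_range]
      have hsum_eq : ∀ i ∈ Finset.range (n+1-m0),
          cesaroA (δ-1) (m0+i) * Real.cos (ψ - 2*(↑(m0+i))*φ)
          = cesaroA (δ-1) (m0+i) * Real.cos ((ψ - 2*(m0:ℝ)*φ) - 2*(i:ℝ)*φ) := by
        intro i _
        rw [show ψ - 2*((↑(m0+i)):ℝ)*φ = (ψ - 2*(m0:ℝ)*φ) - 2*(i:ℝ)*φ by push_cast; ring]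
      rw [Finset.sum_congr rfl hsum_eq]
      have hanti := cesaroA_sub_one_antitone hδ0 hδ1
      have hb := abel_bound (fun i => cesaroA (δ-1) (m0+i))
        (fun i => Real.cos ((ψ - 2*(m0:ℝ)*φ) - 2*(i:ℝ)*φ)) (1/Real.sin φ)
        (fun i => hanti (Nat.le_succ (m0+i)))
        (fun i => (cesaroA_pos (by linarith) _).le)
        (fun m => abs_sum_cos_le hsinpos _ m) (n+1-m0)
      simp only [Nat.add_zero] at hb
      refine le_trans hb ?_
      -- cesaroA (δ-1) (m0+0) * (1/sin φ) ≤ 3 * φ^(-δ)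
      have hup : cesaroA (δ-1) m0 ≤ φ^(1-δ) := by
        have h1 : cesaroA (δ-1) (M+1) ≤ ((M:ℝ)+1+1)^(δ-1) := by
          have := cesaroA_sub_one_upper hδ0 hδ1 (M+1)
          push_cast at this
          exact this
        have h2 : 1/φ ≤ (M:ℝ)+1+1 := by
          have := Nat.lt_floor_add_one (1/φ)
          push_cast at this ⊢
          linarith
        have h3 : ((M:ℝ)+1+1)^(δ-1) ≤ (1/φ)^(δ-1) :=
          Real.rpow_le_rpow_of_nonpos (by positivity) h2 (by linarith)
        have h4 : ((1:ℝ)/φ)^(δ-1) = φ^(1-δ) := by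
          rw [show (1:ℝ)-δ = -(δ-1) by ring, Real.rpow_neg hφ0.le, one_div,
            Real.inv_rpow hφ0.le]
        rw [hm0eq]
        calc cesaroA (δ-1) (M+1) ≤ ((M:ℝ)+1+1)^(δ-1) := h1
          _ ≤ (1/φ)^(δ-1) := h3
          _ = φ^(1-δ) := h4
      have hinv : 1/Real.sin φ ≤ 3/φ := by
        calc 1/Real.sin φ ≤ 1/(φ/3) := one_div_le_one_div_of_le (by positivity) hsin3
          _ = 3/φ := one_div_div φ 3
      have hφpow : φ^(1-δ) * (3/φ) = 3 * φ^(-δ) := by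
        have hh : φ^(1-δ) = φ^(-δ) * φ := by
          rw [← Real.rpow_add_one hφ0.ne' (-δ)]
          congr 1
          ring
        rw [hh]
        field_simp
      calc cesaroA (δ-1) m0 * (1/Real.sin φ) ≤ φ^(1-δ) * (3/φ) := by
            apply mul_le_mul hup hinv (by positivity) (by positivity)
        _ = 3 * φ^(-δ) := hφpow
    · have hm0eq : m0 = n + 1 := min_eq_right (by omega)
      rw [hm0eq, Finset.Ico_self, Finset.sum_empty, abs_zero]
      positivity
  rw [hsplitsum]
  calc |∑ ν ∈ Finset.range m0, cesaroA (δ-1) ν * Real.cos (ψ - 2*ν*φ) +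
        ∑ ν ∈ Finset.Ico m0 (n+1), cesaroA (δ-1) ν * Real.cos (ψ - 2*ν*φ)|
      ≤ |∑ ν ∈ Finset.range m0, cesaroA (δ-1) ν * Real.cos (ψ - 2*ν*φ)| +
        |∑ ν ∈ Finset.Ico m0 (n+1), cesaroA (δ-1) ν * Real.cos (ψ - 2*ν*φ)| := abs_add_le _ _
    _ ≤ (4/δ) * φ^(-δ) + 3 * φ^(-δ) := add_le_add hhead htail
    _ = (4/δ + 3) * φ^(-δ) := by ring

end CesAux
namespace CesAux

open Real Finset

lemma reflect_sum (a : ℕ → ℝ) (n : ℕ) (φ : ℝ) :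
    ∑ k ∈ Finset.range (n+1), a (n - k) * Real.cos ((2*(k:ℝ)+1)*φ)
      = ∑ ν ∈ Finset.range (n+1), a ν * Real.cos ((2*(n:ℝ)+1)*φ - 2*(ν:ℝ)*φ) := by
  rw [← Finset.sum_range_reflect]
  apply Finset.sum_congr rfl
  intro j hj
  have hjn : j ≤ n := Nat.lt_succ_iff.mp (Finset.mem_range.mp hj)
  have h2 : n + 1 - 1 - j = n - j := by omega
  rw [h2, Nat.sub_sub_self hjn]
  congr 2
  push_cast [Nat.cast_sub hjn]
  ring

lemma main_est {δ : ℝ} (hδ0 : 0 < δ) (hδ1 : δ < 1) (n : ℕ) {u1 u2 φ φ' : ℝ} (ψ : ℝ)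
    (hu1p : 0 < u1) (hu1le : u1 ≤ 1) (hu2p : 0 < u2) (hu2le : u2 ≤ u1/3)
    (hφlb : π * u1 / 3 ≤ φ) (hφub : φ ≤ 2*π/3)
    (hφ'lb : π * u1 / 3 ≤ φ') (hφ'ub : φ' ≤ 2*π/3) :
    (1 / cesaroA δ n) * ((1/(2 * (Real.sin (π*u2) * Real.sin φ'))) *
      |∑ ν ∈ Finset.range (n+1), cesaroA (δ-1) ν * Real.cos (ψ - 2*ν*φ)|) ≤
      (4/δ+3) / (u1 ^ (δ+1) * ((n:ℝ)+1)^δ * u2) := by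
  have hπ0 : 0 < π := Real.pi_pos
  have hπ3 : 3 < π := Real.pi_gt_three
  have hApos : 0 < cesaroA δ n := cesaroA_pos (by linarith) n
  have hAlb : ((n:ℝ)+1)^δ ≤ cesaroA δ n := cesaroA_lower hδ0 hδ1 n
  have hNpos : (0:ℝ) < ((n:ℝ)+1)^δ := Real.rpow_pos_of_pos (by positivity) δ
  have hφ0 : 0 < φ := lt_of_lt_of_le (by positivity) hφlb
  have hφ'0 : 0 < φ' := lt_of_lt_of_le (by positivity) hφ'lb
  have hs2pos : 0 < Real.sin (π*u2) :=
    Real.sin_pos_of_pos_of_lt_pi (by positivity) (by nlinarith)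
  have hs2 : 2*u2 ≤ Real.sin (π*u2) := by
    have h := Real.mul_le_sin (by positivity : (0:ℝ) ≤ π*u2) (by nlinarith : π*u2 ≤ π/2)
    have h2 : 2/π*(π*u2) = 2*u2 := by field_simp
    linarith [h2 ▸ h]
  have hs'pos : 0 < Real.sin φ' := Real.sin_pos_of_pos_of_lt_pi hφ'0 (by linarith)
  have hs' : u1/3 ≤ Real.sin φ' := by
    have h := sin_ge hφ'0.le hφ'ub
    nlinarith
  have hcore := core hδ0 hδ1 n ψ hφ0 hφub
  have hφu1 : u1 ≤ φ := by nlinarith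
  have hφrpow : φ^(-δ) ≤ u1^(-δ) :=
    Real.rpow_le_rpow_of_nonpos hu1p hφu1 (by linarith)
  have hS : |∑ ν ∈ Finset.range (n+1), cesaroA (δ-1) ν * Real.cos (ψ - 2*ν*φ)| ≤
      (4/δ+3) * u1^(-δ) := by
    refine hcore.trans ?_
    exact mul_le_mul_of_nonneg_left hφrpow (by positivity)
  have hB : (2*u2)*(u1/3) ≤ Real.sin (π*u2) * Real.sin φ' :=
    mul_le_mul hs2 hs' (by positivity) hs2pos.le
  have step1 : (1 / cesaroA δ n) * ((1/(2 * (Real.sin (π*u2) * Real.sin φ'))) *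
      |∑ ν ∈ Finset.range (n+1), cesaroA (δ-1) ν * Real.cos (ψ - 2*ν*φ)|) ≤
      (1/(((n:ℝ)+1)^δ)) * ((1/(2*((2*u2)*(u1/3)))) * ((4/δ+3) * u1^(-δ))) := by
    gcongr
  refine step1.trans ?_
  have hP : (0:ℝ) < u1^δ := Real.rpow_pos_of_pos hu1p δ
  have h1 : u1^(δ+1) = u1^δ * u1 := by rw [Real.rpow_add_one hu1p.ne' δ]
  have h2 : u1^(-δ) = (u1^δ)⁻¹ := Real.rpow_neg hu1p.le δ
  rw [h1, h2]
  have heq : (1/(((n:ℝ)+1)^δ)) * ((1/(2*((2*u2)*(u1/3)))) * ((4/δ+3) * (u1^δ)⁻¹))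
      = (3/4) * ((4/δ+3) / (u1^δ * u1 * ((n:ℝ)+1)^δ * u2)) := by
    field_simp
    ring
  rw [heq]
  have hpos : (0:ℝ) ≤ (4/δ+3) / (u1^δ * u1 * ((n:ℝ)+1)^δ * u2) := by positivity
  linarith

end CesAux
open Real in
theorem stmt_11 :
    ∀ δ : ℝ, 0 < δ → δ < 1 → ∃ C : ℝ, 0 < C ∧
      ∀ n : ℕ, ∀ u : ℝ × ℝ, u ∈ GammaT → 1 / ((n : ℝ) + 1) ≤ u.1 → 0 < u.2 →
        (∀ H : ℕ → (ℝ × ℝ) → ℝ, (H = Hstar2 ∨ H = Hstar3) →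
          |(1 / cesaroA δ n) *
              ∑ k ∈ Finset.range (n + 1), cesaroA (δ - 1) (n - k) * H k u| ≤
            C / (u.1 ^ (δ + 1) * (n + 1 : ℝ) ^ δ * u.2)) := by
  intro δ hδ0 hδ1
  refine ⟨4/δ + 3, by positivity, ?_⟩
  intro n u hu hun hu2p
  obtain ⟨hu2nn, hu2le, hu1nn, hu1le⟩ := hu
  have hu1p : 0 < u.1 := lt_of_lt_of_le (by positivity) hun
  have hπ0 : 0 < π := Real.pi_pos
  have hApos : 0 < cesaroA δ n := CesAux.cesaroA_pos (by linarith) n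
  intro H hH
  have hs2pos : 0 < Real.sin (π * u.2) := by
    apply Real.sin_pos_of_pos_of_lt_pi (by positivity)
    nlinarith [mul_pos hπ0 (show (0:ℝ) < 1 - u.2 by linarith)]
  rcases hH with rfl | rfl
  · -- Hstar2
    have hsmpos : 0 < Real.sin (π * (u.1 - u.2) / 2) := by
      apply Real.sin_pos_of_pos_of_lt_pi
      · nlinarith [mul_pos hπ0 (show (0:ℝ) < u.1 - u.2 by linarith)]
      · nlinarith [mul_pos hπ0 (show (0:ℝ) < 1 - (u.1 - u.2)/2 by linarith)]
    have hfact : ∑ k ∈ Finset.range (n+1), cesaroA (δ-1) (n-k) * Hstar2 k u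
        = (-(1/(2*(Real.sin (π*u.2) * Real.sin (π*(u.1-u.2)/2))))) *
          ∑ k ∈ Finset.range (n+1), cesaroA (δ-1) (n-k) *
            Real.cos ((2*(k:ℝ)+1)*(π*(u.1+u.2)/2)) := by
      rw [Finset.mul_sum]
      apply Finset.sum_congr rfl
      intro k _
      unfold Hstar2
      rw [show (2*(k:ℝ)+1) * π * (u.1+u.2) / 2 = (2*(k:ℝ)+1)*(π*(u.1+u.2)/2) by ring]
      field_simp
    rw [hfact, CesAux.reflect_sum]
    rw [abs_mul, abs_mul, abs_neg, abs_of_pos (one_div_pos.mpr hApos),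
      abs_of_pos (show (0:ℝ) < 1/(2*(Real.sin (π*u.2) * Real.sin (π*(u.1-u.2)/2))) by positivity)]
    apply CesAux.main_est hδ0 hδ1 n _ hu1p hu1le hu2p hu2le
    · nlinarith [mul_nonneg hπ0.le (show (0:ℝ) ≤ (u.1+u.2)/2 - u.1/3 by linarith)]
    · nlinarith [mul_nonneg hπ0.le (show (0:ℝ) ≤ 2/3 - (u.1+u.2)/2 by linarith)]
    · nlinarith [mul_nonneg hπ0.le (show (0:ℝ) ≤ (u.1-u.2)/2 - u.1/3 by linarith)]
    · nlinarith [mul_nonneg hπ0.le (show (0:ℝ) ≤ 2/3 - (u.1-u.2)/2 by linarith)]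
  · -- Hstar3
    have hsppos : 0 < Real.sin (π * (u.1 + u.2) / 2) := by
      apply Real.sin_pos_of_pos_of_lt_pi
      · positivity
      · nlinarith [mul_pos hπ0 (show (0:ℝ) < 1 - (u.1 + u.2)/2 by linarith)]
    have hfact : ∑ k ∈ Finset.range (n+1), cesaroA (δ-1) (n-k) * Hstar3 k u
        = (1/(2*(Real.sin (π*u.2) * Real.sin (π*(u.1+u.2)/2)))) *
          ∑ k ∈ Finset.range (n+1), cesaroA (δ-1) (n-k) *
            Real.cos ((2*(k:ℝ)+1)*(π*(u.1-u.2)/2)) := by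
      rw [Finset.mul_sum]
      apply Finset.sum_congr rfl
      intro k _
      unfold Hstar3
      rw [show (2*(k:ℝ)+1) * π * (u.1-u.2) / 2 = (2*(k:ℝ)+1)*(π*(u.1-u.2)/2) by ring]
      field_simp
    rw [hfact, CesAux.reflect_sum]
    rw [abs_mul, abs_mul, abs_of_pos (one_div_pos.mpr hApos),
      abs_of_pos (show (0:ℝ) < 1/(2*(Real.sin (π*u.2) * Real.sin (π*(u.1+u.2)/2))) by positivity)]
    apply CesAux.main_est hδ0 hδ1 n _ hu1p hu1le hu2p hu2le
    · nlinarith [mul_nonneg hπ0.le (show (0:ℝ) ≤ (u.1-u.2)/2 - u.1/3 by linarith)]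
    · nlinarith [mul_nonneg hπ0.le (show (0:ℝ) ≤ 2/3 - (u.1-u.2)/2 by linarith)]
    · nlinarith [mul_nonneg hπ0.le (show (0:ℝ) ≤ (u.1+u.2)/2 - u.1/3 by linarith)]
    · nlinarith [mul_nonneg hπ0.le (show (0:ℝ) ≤ 2/3 - (u.1+u.2)/2 by linarith)]
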